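/- Let c₀ > 0, L ≥ 0, ε > 0 with εL/c₀ ≤ 1, and let S(x) ⊆ ℝ^N, for x ∈ ℝ^N, be convex sets such that B̄(0,c₀) ⊆ S(x) for every x and S(y) ⊆ S(x) + L|x−y|·B̄(0,1) for all x,y. Then for every λ ∈ [0, 1 − εL/c₀] and all x, y with |x−y| ≤ ε, one has λ·S(y) ⊆ S(x). -/

import Mathlib

open Metric Pointwise

/-- If each `S(x)` is convex, contains `B̄(0,c₀)`, and
`S(y) ⊆ S(x) + L|x−y|·B̄(0,1)`, then for `λ ∈ [0, 1 − εL/c₀]` and `|x−y| ≤ ε` one has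
`λ·S(y) ⊆ S(x)`. -/
theorem scaled_set_inclusion {N : ℕ} (hN : 1 ≤ N)
    (c₀ L ε : ℝ) (hc₀ : 0 < c₀) (hL : 0 ≤ L) (hε : 0 < ε) (hεL : ε * L / c₀ ≤ 1)
    (S : EuclideanSpace ℝ (Fin N) → Set (EuclideanSpace ℝ (Fin N)))
    (hconv : ∀ x, Convex ℝ (S x))
    (hball : ∀ x, closedBall (0 : EuclideanSpace ℝ (Fin N)) c₀ ⊆ S x)
    (hLip : ∀ x y, S y ⊆ S x + (L * ‖x - y‖) • closedBall (0 : EuclideanSpace ℝ (Fin N)) 1) :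
    ∀ l ∈ Set.Icc (0:ℝ) (1 - ε * L / c₀), ∀ x y : EuclideanSpace ℝ (Fin N),
      ‖x - y‖ ≤ ε → l • S y ⊆ S x := by
  intro l hl x y hxy z hz
  obtain ⟨z', hz', rfl⟩ := hz
  obtain ⟨a, ha, b, hb, rfl⟩ := hLip x y hz'
  obtain ⟨u, hu, rfl⟩ := hb
  have hu1 : ‖u‖ ≤ 1 := by simpa using hu
  have hxy0 : 0 ≤ ‖x - y‖ := norm_nonneg _
  have hbnorm : ‖(L * ‖x - y‖) • u‖ ≤ L * ε := by
    rw [norm_smul, Real.norm_eq_abs, abs_of_nonneg (mul_nonneg hL hxy0)]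
    nlinarith [mul_nonneg (mul_nonneg hL hxy0) (sub_nonneg.2 hu1),
      mul_nonneg hL (sub_nonneg.2 hxy)]
  have hεLc : 0 ≤ ε * L / c₀ := by positivity
  have hl1 : l ≤ 1 := le_trans hl.2 (by linarith)
  rcases eq_or_lt_of_le hl1 with h1 | h1
  · -- l = 1, forces ε*L/c₀ = 0, hence L = 0 and b = 0
    have h2 : ε * L / c₀ = 0 := le_antisymm (by linarith [hl.2, h1.symm ▸ hl.2]) hεLc
    have h3 : ε * L = 0 := by field_simp at h2; simpa using h2
    have hL0 : L = 0 := by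
      rcases mul_eq_zero.1 h3 with h | h
      · linarith
      · exact h
    show l • (a + (L * ‖x - y‖) • u) ∈ S x
    have hz0 : (L * ‖x - y‖) • u = 0 := by rw [hL0]; simp
    rw [hz0, h1]
    simpa using ha
  · -- l < 1: write l•(a+b) = l•a + (1-l)•v with v in the ball of radius c₀
    have h1l : 0 < 1 - l := by linarith
    set v : EuclideanSpace ℝ (Fin N) := ((1 - l)⁻¹ * l) • ((L * ‖x - y‖) • u) with hv
    have h2 : ε * L ≤ (1 - l) * c₀ :=
      (div_le_iff₀ hc₀).1 (by linarith [hl.2] : ε * L / c₀ ≤ 1 - l)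
    have hlv : ‖v‖ ≤ c₀ := by
      rw [hv, norm_smul, Real.norm_eq_abs,
        abs_of_nonneg (mul_nonneg (inv_nonneg.2 h1l.le) hl.1)]
      calc (1 - l)⁻¹ * l * ‖(L * ‖x - y‖) • u‖ ≤ (1 - l)⁻¹ * l * (L * ε) := by
            apply mul_le_mul_of_nonneg_left hbnorm
            exact mul_nonneg (inv_nonneg.2 h1l.le) hl.1
        _ ≤ c₀ := by
            rw [mul_assoc, inv_mul_le_iff₀ h1l]
            nlinarith [mul_nonneg (sub_nonneg.2 hl1) (mul_nonneg hL hε.le)]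
    have hvS : v ∈ S x := hball x (by simpa [mem_closedBall, dist_eq_norm] using hlv)
    have heq : l • (a + (L * ‖x - y‖) • u) = l • a + (1 - l) • v := by
      rw [hv, smul_smul, smul_add]
      have h3 : (1 - l) * ((1 - l)⁻¹ * l) = l := by field_simp
      rw [h3]
    show l • (a + (L * ‖x - y‖) • u) ∈ S x
    rw [heq]
    exact hconv x ha hvS hl.1 h1l.le (by ring)
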